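/- The number of lattice words of length kn in the alphabet {1,...,n} containing exactly k copies of each letter equals (kn)! · (1! 2! ⋯ (n-1)!) / (k! (k+1)! ⋯ (k+n-1)!). -/

import Mathlib

/-- `w` is a lattice word: every prefix contains at least as many `i`'s as `(i+1)`'s. -/
def IsLatticeWord {n m : ℕ} (w : Fin m → Fin n) : Prop :=
  ∀ (j i : ℕ), i + 1 < n →
    (Finset.univ.filter (fun p : Fin m => (p : ℕ) < j ∧ (w p : ℕ) = i + 1)).card ≤
    (Finset.univ.filter (fun p : Fin m => (p : ℕ) < j ∧ (w p : ℕ) = i)).card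

/-- `w` contains each letter of `Fin n` exactly `k` times. -/
def IsBalanced {n m : ℕ} (k : ℕ) (w : Fin m → Fin n) : Prop :=
  ∀ i : Fin n, (Finset.univ.filter (fun p : Fin m => w p = i)).card = k

open Finset Matrix Polynomial


lemma sum_det_updateRow_eq {n : ℕ} (M S : Matrix (Fin n) (Fin n) ℤ) :
    ∑ i, (M.updateRow i (fun j => ∑ k, M i k * S k j)).det = S.trace * M.det := by
  have h1 : ∀ i : Fin n, (M.updateRow i (fun j => ∑ k, M i k * S k j)).det
      = ∑ k, M i k * Matrix.cramer Mᵀ (S k) i := by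
    intro i
    rw [← Matrix.cramer_transpose_apply]
    have : (fun j => ∑ k, M i k * S k j) = ∑ k, M i k • S k := by
      funext j; simp [Finset.sum_apply]
    rw [this, map_sum]
    simp only [Finset.sum_apply, LinearMap.map_smul_of_tower, Pi.smul_apply, smul_eq_mul]
  simp_rw [h1]
  rw [Finset.sum_comm]
  have h2 : ∀ k : Fin n, ∑ i, M i k * Matrix.cramer Mᵀ (S k) i = M.det * S k k := by
    intro k
    have := Matrix.mulVec_cramer Mᵀ (S k)
    have h3 : (Mᵀ *ᵥ Matrix.cramer Mᵀ (S k)) k = (Mᵀ.det • S k) k := by rw [this]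
    simpa [Matrix.mulVec, dotProduct, Matrix.transpose_apply, mul_comm] using h3
  simp_rw [h2]
  rw [Matrix.trace, Finset.sum_mul]
  simp [Matrix.diag, mul_comm]



lemma monic_X_sub_one : (X - 1 : Polynomial ℤ).Monic := by
  simpa using Polynomial.monic_X_sub_C (1:ℤ)

lemma monic_X_mul_sub_one_pow (t : ℕ) : (X * (X - 1 : Polynomial ℤ) ^ t).Monic :=
  Polynomial.monic_X.mul (monic_X_sub_one.pow t)

lemma natDegree_X_mul_sub_one_pow (t : ℕ) :
    (X * (X - 1 : Polynomial ℤ) ^ t).natDegree = t + 1 := by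
  have h1 : (X - 1 : Polynomial ℤ).natDegree = 1 := by
    simpa using Polynomial.natDegree_X_sub_C (1:ℤ)
  rw [Polynomial.natDegree_mul Polynomial.X_ne_zero
    (pow_ne_zero _ monic_X_sub_one.ne_zero), Polynomial.natDegree_pow, h1,
    Polynomial.natDegree_X]
  ring

lemma coeff_X_mul_sub_one_pow (t : ℕ) :
    (X * (X - 1 : Polynomial ℤ) ^ t).coeff t = -(t : ℤ) := by
  cases t with
  | zero => simp
  | succ s =>
    rw [Polynomial.coeff_X_mul]
    have h1 : ((X - 1 : Polynomial ℤ)) ^ (s+1) = ∏ _k ∈ Finset.range (s+1), (X - C (1:ℤ)) := by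
      simp
    have hd : ((X - 1 : Polynomial ℤ) ^ (s+1)).natDegree = s + 1 := by
      have h2 : (X - 1 : Polynomial ℤ).natDegree = 1 := by
        simpa using Polynomial.natDegree_X_sub_C (1:ℤ)
      rw [Polynomial.natDegree_pow, h2, mul_one]
    have hnc := Polynomial.prod_X_sub_C_nextCoeff (s := Finset.range (s+1)) (fun _ => (1:ℤ))
    rw [← h1] at hnc
    have h3 := Polynomial.nextCoeff_of_natDegree_pos
      (by omega : 0 < ((X - 1 : Polynomial ℤ) ^ (s+1)).natDegree)
    rw [h3, hd] at hnc
    simpa using hnc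

lemma key_vandermonde : ∀ (n : ℕ) (a : Fin n → ℤ),
    ∑ i, a i * (Matrix.vandermonde (Function.update a i (a i - 1))).det
      = (∑ i, a i - ∑ i : Fin n, (i : ℤ)) * (Matrix.vandermonde a).det := by
  intro n a
  rcases Nat.eq_zero_or_pos n with hn | hn
  · subst hn; simp
  set Q : Polynomial ℤ := ∏ k, (X - C (a k)) with hQ
  have hQmonic : Q.Monic := Polynomial.monic_prod_of_monic _ _ (fun k _ => Polynomial.monic_X_sub_C _)
  have hQdeg : Q.natDegree = n := by
    rw [hQ, Polynomial.natDegree_prod _ _ (fun k _ => Polynomial.X_sub_C_ne_zero _),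
      Finset.sum_congr rfl (fun k _ => Polynomial.natDegree_X_sub_C (a k))]
    simp
  set P : Fin n → Polynomial ℤ :=
    fun j => X * (X - 1) ^ (j:ℕ) - (if (j:ℕ) = n - 1 then Q else 0) with hP
  have hPdeg : ∀ j : Fin n, (P j).natDegree < n := by
    intro j
    by_cases hj : (j:ℕ) = n - 1
    · have hd1 : (X * (X - 1 : Polynomial ℤ) ^ (j:ℕ)).natDegree = n := by
        rw [natDegree_X_mul_sub_one_pow, hj]; omega
      have hdeq : (X * (X - 1 : Polynomial ℤ) ^ (j:ℕ)).degree = Q.degree := by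
        rw [Polynomial.degree_eq_natDegree (monic_X_mul_sub_one_pow (j:ℕ)).ne_zero,
          Polynomial.degree_eq_natDegree hQmonic.ne_zero, hd1, hQdeg]
      have hlt := Polynomial.degree_sub_lt hdeq (monic_X_mul_sub_one_pow (j:ℕ)).ne_zero
        (by rw [(monic_X_mul_sub_one_pow (j:ℕ)).leadingCoeff, hQmonic.leadingCoeff])
      have hPj : P j = X * (X - 1) ^ (j:ℕ) - Q := by simp [hP, hj]
      rw [hPj]
      rw [Polynomial.degree_eq_natDegree (monic_X_mul_sub_one_pow (j:ℕ)).ne_zero, hd1] at hlt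
      by_cases h0 : (X * (X - 1 : Polynomial ℤ) ^ (j:ℕ) - Q) = 0
      · rw [h0]; simpa using hn
      · exact (Polynomial.natDegree_lt_iff_degree_lt h0).mpr hlt
    · simp only [hP, hj, if_false, sub_zero]
      rw [natDegree_X_mul_sub_one_pow]
      have := j.isLt; omega
  have hQeval : ∀ i : Fin n, Polynomial.eval (a i) Q = 0 := by
    intro i
    rw [hQ, Polynomial.eval_prod]
    exact Finset.prod_eq_zero (Finset.mem_univ i) (by simp)
  have hPeval : ∀ i j : Fin n, Polynomial.eval (a i) (P j) = a i * (a i - 1) ^ (j:ℕ) := by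
    intro i j
    simp only [hP, Polynomial.eval_sub, Polynomial.eval_mul, Polynomial.eval_pow,
      Polynomial.eval_X, Polynomial.eval_one]
    by_cases hj : (j:ℕ) = n - 1 <;> simp [hj, hQeval i]
  set S : Matrix (Fin n) (Fin n) ℤ := fun k j => (P j).coeff k with hS
  -- rows
  have hrow : ∀ i : Fin n, (fun j : Fin n => a i * (a i - 1) ^ (j:ℕ))
      = fun j => ∑ k, Matrix.vandermonde a i k * S k j := by
    intro i
    funext j
    rw [← hPeval i j, Polynomial.eval_eq_sum_range' (hPdeg j) (a i),
      ← Fin.sum_univ_eq_sum_range (fun t => (P j).coeff t * a i ^ t)]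
    simp [Matrix.vandermonde_apply, hS, mul_comm]
  -- trace of S
  have htr : S.trace = ∑ i, a i - ∑ i : Fin n, (i : ℤ) := by
    have hQc : Q.coeff (n-1) = -∑ i, a i := by
      have h1 := Polynomial.prod_X_sub_C_nextCoeff (s := (Finset.univ : Finset (Fin n))) a
      rw [← hQ] at h1
      have h2 := Polynomial.nextCoeff_of_natDegree_pos (by omega : 0 < Q.natDegree)
      rw [h2, hQdeg] at h1
      exact h1
    have hdiag : ∀ j : Fin n, S j j = -(j:ℤ) + (if (j:ℕ) = n - 1 then ∑ i, a i else 0) := by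
      intro j
      simp only [hS]
      by_cases hj : (j:ℕ) = n - 1
      · simp only [hP, hj, if_pos, Polynomial.coeff_sub]
        rw [coeff_X_mul_sub_one_pow (n-1), hQc]
        push_cast; ring
      · simp only [hP, hj, if_false, Polynomial.coeff_sub, Polynomial.coeff_zero, sub_zero]
        rw [coeff_X_mul_sub_one_pow]
        simp [hj]
    rw [Matrix.trace]
    have : ∀ j : Fin n, Matrix.diag S j = S j j := fun j => rfl
    simp_rw [this, hdiag]
    rw [Finset.sum_add_distrib]
    have hone : ∀ x : Fin n, (if (x:ℕ) = n-1 then ∑ i, a i else 0)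
        = if x = (⟨n-1, by omega⟩ : Fin n) then ∑ i, a i else 0 := by
      intro x
      exact if_congr (by simp [Fin.ext_iff]) rfl rfl
    simp_rw [hone]
    rw [Finset.sum_ite_eq' Finset.univ (⟨n-1, by omega⟩ : Fin n) (fun _ => ∑ i, a i)]
    simp only [Finset.mem_univ, if_pos]
    rw [Finset.sum_neg_distrib]
    ring
  -- assembly
  have hstep : ∀ i : Fin n, a i * (Matrix.vandermonde (Function.update a i (a i - 1))).det
      = ((Matrix.vandermonde a).updateRow i
          (fun j => ∑ k, Matrix.vandermonde a i k * S k j)).det := by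
    intro i
    have hupd : Matrix.vandermonde (Function.update a i (a i - 1))
        = (Matrix.vandermonde a).updateRow i (fun j => (a i - 1) ^ (j:ℕ)) := by
      ext p q
      by_cases hp : p = i
      · subst hp
        simp [Matrix.vandermonde_apply]
      · simp [Matrix.vandermonde_apply, Matrix.updateRow_ne hp, Function.update_of_ne hp]
    rw [hupd, ← hrow i]
    have hsmul : (fun j : Fin n => a i * (a i - 1) ^ (j:ℕ))
        = a i • (fun j : Fin n => (a i - 1) ^ (j:ℕ)) := by
      funext j; simp
    rw [hsmul, Matrix.det_updateRow_smul]
  simp_rw [hstep]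
  rw [sum_det_updateRow_eq, htr]

def vprod {n : ℕ} (b : Fin n → ℤ) : ℤ := ∏ i, ∏ j ∈ Finset.Ioi i, (b i - b j)



lemma vprod_eq {n : ℕ} (b : Fin n → ℤ) :
    vprod b = (∏ i : Fin n, (-1:ℤ)^(Finset.Ioi i).card) * (Matrix.vandermonde b).det := by
  rw [Matrix.det_vandermonde, vprod, ← Finset.prod_mul_distrib]
  refine Finset.prod_congr rfl fun i _ => ?_
  calc ∏ j ∈ Finset.Ioi i, (b i - b j)
      = ∏ j ∈ Finset.Ioi i, (-1) * (b j - b i) := by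
        refine Finset.prod_congr rfl fun j _ => by ring
    _ = _ := by
        rw [Finset.prod_mul_distrib, Finset.prod_const]

lemma key_vprod (n : ℕ) (a : Fin n → ℤ) :
    ∑ i, a i * vprod (Function.update a i (a i - 1))
      = (∑ i, a i - ∑ i : Fin n, (i : ℤ)) * vprod a := by
  simp_rw [vprod_eq]
  set e : ℤ := ∏ i : Fin n, (-1:ℤ)^(Finset.Ioi i).card with he
  have : ∑ i, a i * (e * (Matrix.vandermonde (Function.update a i (a i - 1))).det)
      = e * ∑ i, a i * (Matrix.vandermonde (Function.update a i (a i - 1))).det := by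
    rw [Finset.mul_sum]; refine Finset.sum_congr rfl fun i _ => by ring
  rw [this, key_vandermonde]
  ring

lemma prod_Ioc_sub (t : ℕ) : ∀ m : ℕ, t ≤ m →
    ∏ s ∈ Finset.Ioc t m, ((s:ℤ) - (t:ℤ)) = ((m - t).factorial : ℤ) := by
  intro m
  induction m with
  | zero => intro h; interval_cases t; simp
  | succ m ih =>
    intro h
    rcases Nat.lt_or_ge t (m+1) with h1 | h1
    · have ht : t ≤ m := by omega
      rw [Finset.prod_Ioc_succ_top ht, ih ht]
      have : m + 1 - t = (m - t) + 1 := by omega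
      rw [this, Nat.factorial_succ]
      push_cast [Nat.cast_sub ht]
      ring
    · have : t = m + 1 := by omega
      subst this; simp

lemma vprod_shift {n : ℕ} (b : Fin n → ℤ) (z : ℤ) : vprod (fun i => z + b i) = vprod b := by
  unfold vprod
  refine Finset.prod_congr rfl fun i _ => Finset.prod_congr rfl fun j _ => by ring

lemma vprod_delta (n : ℕ) :
    vprod (fun i : Fin n => (n:ℤ) - 1 - (i:ℕ)) = ∏ i ∈ Finset.range n, ((i.factorial : ℤ)) := by
  have h1 : vprod (fun i : Fin n => (n:ℤ) - 1 - (i:ℕ))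
      = ∏ i : Fin n, ∏ j ∈ Finset.Ioi i, ((j:ℤ) - (i:ℤ)) := by
    unfold vprod
    refine Finset.prod_congr rfl fun i _ => Finset.prod_congr rfl fun j _ => by ring
  rw [h1]
  have h2 : ∀ i : Fin n, ∏ j ∈ Finset.Ioi i, ((j:ℤ) - (i:ℤ))
      = ∏ s ∈ Finset.Ioc (i:ℕ) (n-1), ((s:ℤ) - (i:ℤ)) := by
    intro i
    have hIoo : Finset.Ioc (i:ℕ) (n-1) = Finset.Ioo (i:ℕ) n := by
      ext t; simp only [Finset.mem_Ioc, Finset.mem_Ioo]; omega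
    rw [hIoo, ← Fin.map_valEmbedding_Ioi, Finset.prod_map]
    rfl
  simp_rw [h2]
  have h3 : ∀ i : Fin n, ∏ s ∈ Finset.Ioc (i:ℕ) (n-1), ((s:ℤ) - (i:ℤ))
      = ((n - 1 - (i:ℕ)).factorial : ℤ) := by
    intro i
    exact prod_Ioc_sub (i:ℕ) (n-1) (by have := i.isLt; omega)
  simp_rw [h3]
  rw [Fin.prod_univ_eq_prod_range (fun t => ((n - 1 - t).factorial : ℤ))]
  rw [Finset.prod_range_reflect (fun t => ((t).factorial : ℤ)) n]

def pcnt {n m : ℕ} (w : Fin m → Fin n) (j i : ℕ) : ℕ :=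
  (Finset.univ.filter (fun p : Fin m => (p : ℕ) < j ∧ (w p : ℕ) = i)).card

def ctv {n m : ℕ} (w : Fin m → Fin n) (i : ℕ) : ℕ :=
  (Finset.univ.filter (fun p : Fin m => (w p : ℕ) = i)).card

def Words (n m : ℕ) (c : Fin n → ℕ) : Type :=
  {w : Fin m → Fin n // IsLatticeWord w ∧ ∀ i : Fin n,
    (Finset.univ.filter (fun p : Fin m => w p = i)).card = c i}

lemma lattice_iff {n m : ℕ} (w : Fin m → Fin n) :
    IsLatticeWord w ↔ ∀ j i : ℕ, i + 1 < n → pcnt w j (i+1) ≤ pcnt w j i := Iff.rfl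

lemma pcnt_of_le {n m : ℕ} (w : Fin m → Fin n) {j : ℕ} (h : m ≤ j) (i : ℕ) :
    pcnt w j i = ctv w i := by
  unfold pcnt ctv
  congr 1
  apply Finset.filter_congr
  intro p _
  simp only [and_iff_right_iff_imp]
  intro _
  exact lt_of_lt_of_le p.isLt h

lemma ctv_eq_cnt {n m : ℕ} (w : Fin m → Fin n) (i : Fin n) :
    ctv w (i:ℕ) = (Finset.univ.filter (fun p : Fin m => w p = i)).card := by
  unfold ctv
  congr 1
  apply Finset.filter_congr
  intro p _
  simp [Fin.ext_iff]

lemma sum_cnt {n m : ℕ} (w : Fin m → Fin n) :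
    ∑ i : Fin n, (Finset.univ.filter (fun p : Fin m => w p = i)).card = m := by
  have := (Finset.card_eq_sum_card_fiberwise
    (f := w) (s := Finset.univ) (t := Finset.univ) (fun p _ => Finset.mem_univ (w p)))
  simpa using this.symm

lemma lattice_ctv {n m : ℕ} {w : Fin m → Fin n} (hw : IsLatticeWord w) {i : ℕ}
    (h : i + 1 < n) : ctv w (i+1) ≤ ctv w i := by
  have h2 := hw m i h
  have e1 : pcnt w m (i+1) ≤ pcnt w m i := h2
  rwa [pcnt_of_le w le_rfl, pcnt_of_le w le_rfl] at e1

-- snoc lemmas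
lemma pcnt_snoc {n m : ℕ} (w' : Fin m → Fin n) (x : Fin n) {j : ℕ} (hj : j ≤ m) (i : ℕ) :
    pcnt (Fin.snoc w' x) j i = pcnt w' j i := by
  unfold pcnt
  rw [Finset.card_filter, Finset.card_filter, Fin.sum_univ_castSucc]
  have hlast : (if ((Fin.last m : Fin (m+1)) : ℕ) < j ∧ ((Fin.snoc w' x : Fin (m+1) → Fin n) (Fin.last m) : ℕ) = i then 1 else 0) = 0 := by
    simp only [Fin.val_last]
    have : ¬ (m < j) := by omega
    simp [this]
  rw [hlast, add_zero]
  refine Finset.sum_congr rfl fun p _ => ?_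
  simp [Fin.snoc_castSucc]

lemma ctv_snoc {n m : ℕ} (w' : Fin m → Fin n) (x : Fin n) (i : ℕ) :
    ctv (Fin.snoc w' x) i = ctv w' i + (if (x : ℕ) = i then 1 else 0) := by
  unfold ctv
  rw [Finset.card_filter, Finset.card_filter, Fin.sum_univ_castSucc]
  congr 1
  · refine Finset.sum_congr rfl fun p _ => ?_
    simp [Fin.snoc_castSucc]
  · simp [Fin.snoc_last]

lemma lattice_init {n m : ℕ} {w' : Fin m → Fin n} {x : Fin n}
    (hw : IsLatticeWord (Fin.snoc w' x)) : IsLatticeWord w' := by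
  rw [lattice_iff]
  intro j i h
  rcases le_or_gt j m with hj | hj
  · rw [← pcnt_snoc w' x hj, ← pcnt_snoc w' x hj]
    exact hw j i h
  · rw [pcnt_of_le w' (by omega), pcnt_of_le w' (by omega),
      ← pcnt_of_le w' (le_refl m), ← pcnt_of_le w' (le_refl m),
      ← pcnt_snoc w' x (le_refl m), ← pcnt_snoc w' x (le_refl m)]
    exact hw m i h

lemma lattice_snoc {n m : ℕ} {w' : Fin m → Fin n} {x : Fin n}
    (hw : IsLatticeWord w')
    (hfull : ∀ i : ℕ, i + 1 < n → ctv (Fin.snoc w' x) (i+1) ≤ ctv (Fin.snoc w' x) i) :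
    IsLatticeWord (Fin.snoc w' x) := by
  rw [lattice_iff]
  intro j i h
  rcases le_or_gt j m with hj | hj
  · rw [pcnt_snoc w' x hj, pcnt_snoc w' x hj]
    exact hw j i h
  · rw [pcnt_of_le _ (by omega), pcnt_of_le _ (by omega)]
    exact hfull i h

instance {n m : ℕ} {c : Fin n → ℕ} : Finite (Words n m c) := by
  unfold Words; infer_instance

lemma card_words_succ (n m : ℕ) (c : Fin n → ℕ)
    (hc : ∀ i j : Fin n, i ≤ j → c j ≤ c i) (hsum : ∑ i, c i = m + 1) :
    Nat.card (Words n (m+1) c)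
      = ∑ x : Fin n, Nat.card (Words n m (fun t => c t - if t = x then 1 else 0)) := by
  classical
  rw [Nat.card_congr (Equiv.sigmaFiberEquiv
    (fun w : Words n (m+1) c => w.1 (Fin.last m))).symm]
  haveI : ∀ x : Fin n, Finite {w : Words n (m+1) c // w.1 (Fin.last m) = x} := by
    intro x
    exact Subtype.finite
  haveI : ∀ x : Fin n, Fintype {w : Words n (m+1) c // w.1 (Fin.last m) = x} := by
    intro x; exact Fintype.ofFinite _
  rw [Nat.card_eq_fintype_card, Fintype.card_sigma]
  rw [← Finset.sum_congr rfl (fun x _ => Nat.card_eq_fintype_card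
    (α := {w : Words n (m+1) c // w.1 (Fin.last m) = x}))]
  refine Finset.sum_congr rfl fun x _ => ?_
  -- per-fiber bijection
  -- key forward fact
  have key : ∀ (w : Fin (m+1) → Fin n), IsLatticeWord w →
      (∀ i : Fin n, (Finset.univ.filter (fun p => w p = i)).card = c i) →
      w (Fin.last m) = x →
      (IsLatticeWord (Fin.init w) ∧ ∀ i : Fin n,
        (Finset.univ.filter (fun p : Fin m => Fin.init w p = i)).card
          = c i - if i = x then 1 else 0) := by
    intro w hw hcnt hx
    have hsnoc : Fin.snoc (Fin.init w) x = w := by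
      rw [← hx]; exact Fin.snoc_init_self w
    constructor
    · apply lattice_init (x := x)
      rwa [hsnoc]
    · intro i
      have h1 : ctv (Fin.snoc (Fin.init w) x) (i:ℕ)
          = ctv (Fin.init w) (i:ℕ) + (if (x:ℕ) = (i:ℕ) then 1 else 0) := ctv_snoc _ _ _
      rw [hsnoc, ctv_eq_cnt, hcnt i, ctv_eq_cnt] at h1
      have h2 : (if (x:ℕ) = (i:ℕ) then 1 else 0) = (if i = x then 1 else 0) := by
        by_cases h : i = x
        · subst h; simp
        · have hv : ¬((x:ℕ) = (i:ℕ)) := fun hh => h (Fin.ext hh.symm)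
          simp [h, hv]
      rw [h2] at h1
      omega
  refine Nat.card_eq_of_bijective
    (fun w => ⟨Fin.init w.1.1,
      (key w.1.1 w.1.2.1 w.1.2.2 w.2).1, (key w.1.1 w.1.2.1 w.1.2.2 w.2).2⟩) ⟨?_, ?_⟩
  · -- injective
    rintro ⟨⟨w1, h1⟩, hx1⟩ ⟨⟨w2, h2⟩, hx2⟩ heq
    have : Fin.init w1 = Fin.init w2 := congrArg Subtype.val heq
    apply Subtype.ext; apply Subtype.ext
    have e : Fin.snoc (Fin.init w1) (w1 (Fin.last m))
        = Fin.snoc (Fin.init w2) (w2 (Fin.last m)) := by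
      rw [show w1 (Fin.last m) = x from hx1, show w2 (Fin.last m) = x from hx2, this]
    rw [Fin.snoc_init_self, Fin.snoc_init_self] at e
    exact e
  · -- surjective
    rintro ⟨w', hw', hcnt'⟩
    -- first : c x ≥ 1
    have hsum' : ∑ i : Fin n, (c i - if i = x then 1 else 0) = m := by
      rw [← Finset.sum_congr rfl (fun i _ => hcnt' i)]
      exact sum_cnt w'
    have hcx : 1 ≤ c x := by
      by_contra hcon
      have hx0 : c x = 0 := by omega
      have e1 : ∑ i : Fin n, (c i - if i = x then 1 else 0) = ∑ i : Fin n, c i := by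
        refine Finset.sum_congr rfl fun i _ => ?_
        by_cases h : i = x
        · subst h; simp [hx0]
        · simp [h]
      omega
    -- counts of snoc
    have hcntS : ∀ i : Fin n,
        (Finset.univ.filter (fun p : Fin (m+1) => (Fin.snoc w' x : Fin (m+1) → Fin n) p = i)).card = c i := by
      intro i
      have h1 := ctv_snoc w' x (i:ℕ)
      have hc'' : (Finset.univ.filter (fun p : Fin m => w' p = i)).card
          = c i - (if i = x then 1 else 0) := hcnt' i
      rw [ctv_eq_cnt, ctv_eq_cnt, hc''] at h1
      have h2 : (if (x:ℕ) = (i:ℕ) then 1 else 0) = (if i = x then 1 else 0) := by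
        by_cases h : i = x
        · subst h; simp
        · have hv : ¬((x:ℕ) = (i:ℕ)) := fun hh => h (Fin.ext hh.symm)
          simp [h, hv]
      rw [h2] at h1
      by_cases h : i = x
      · subst h; simp at h1 ⊢; omega
      · simp only [if_neg h] at h1 ⊢; omega
    have hlatS : IsLatticeWord (Fin.snoc w' x) := by
      apply lattice_snoc hw'
      intro i hi
      have hii : i < n := by omega
      have e1 : ctv (Fin.snoc w' x) i = c ⟨i, hii⟩ := by
        have h := ctv_eq_cnt (Fin.snoc w' x) (⟨i, hii⟩ : Fin n)
        rw [hcntS] at h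
        exact h
      have e2 : ctv (Fin.snoc w' x) (i+1) = c ⟨i+1, hi⟩ := by
        have h := ctv_eq_cnt (Fin.snoc w' x) (⟨i+1, hi⟩ : Fin n)
        rw [hcntS] at h
        exact h
      rw [e1, e2]
      exact hc ⟨i, hii⟩ ⟨i+1, hi⟩ (by simp [Fin.le_def])
    refine ⟨⟨⟨Fin.snoc w' x, hlatS, hcntS⟩, ?_⟩, ?_⟩
    · show (Fin.snoc w' x : Fin (m+1) → Fin n) (Fin.last m) = x
      exact Fin.snoc_last _ _
    · apply Subtype.ext
      show Fin.init ((Fin.snoc w' x : Fin (m+1) → Fin n)) = w'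
      exact Fin.init_snoc (α := fun _ : Fin (m+1) => Fin n) x w'

-- new material
lemma card_words_of_sum_ne (n m : ℕ) (c : Fin n → ℕ) (h : ∑ i, c i ≠ m) :
    Nat.card (Words n m c) = 0 := by
  have : IsEmpty (Words n m c) := by
    constructor
    intro w
    exact h (((Finset.sum_congr rfl fun i _ => (w.2.2 i).symm).trans (sum_cnt w.1)))
  exact Nat.card_of_isEmpty

lemma card_words_of_desc (n m : ℕ) (c : Fin n → ℕ) (i j : Fin n)
    (hij : (j:ℕ) = (i:ℕ) + 1) (h : c i < c j) : Nat.card (Words n m c) = 0 := by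
  have : IsEmpty (Words n m c) := by
    constructor
    intro w
    have hn : (i:ℕ) + 1 < n := by have := j.isLt; omega
    have h1 := lattice_ctv w.2.1 hn
    have e1 : ctv w.1 ((i:ℕ)+1) = c j := by
      have hh := ctv_eq_cnt w.1 j
      rw [w.2.2] at hh
      rw [← hh, hij]
    have e2 : ctv w.1 (i:ℕ) = c i := by
      have hh := ctv_eq_cnt w.1 i
      rw [w.2.2] at hh
      exact hh
    omega
  exact Nat.card_of_isEmpty

lemma vprod_eq_zero {n : ℕ} {b : Fin n → ℤ} {i j : Fin n} (hij : i < j) (h : b i = b j) :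
    vprod b = 0 := by
  unfold vprod
  refine Finset.prod_eq_zero (Finset.mem_univ i) ?_
  refine Finset.prod_eq_zero (Finset.mem_Ioi.mpr hij) ?_
  rw [h]; ring

lemma sum_reflect_int (n : ℕ) :
    ∑ i : Fin n, ((n:ℤ) - 1 - ((i:ℕ):ℤ)) = ∑ i : Fin n, ((i:ℕ):ℤ) := by
  rw [Fin.sum_univ_eq_sum_range (fun t => ((n:ℤ) - 1 - (t:ℤ))),
    Fin.sum_univ_eq_sum_range (fun t => ((t:ℕ):ℤ))]
  rw [← Finset.sum_range_reflect (fun t => ((t:ℕ):ℤ)) n]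
  refine Finset.sum_congr rfl fun t ht => ?_
  have := Finset.mem_range.mp ht
  omega

theorem main_count (n : ℕ) : ∀ (m : ℕ), ∀ (c : Fin n → ℕ),
    (∀ i j : Fin n, i ≤ j → c j ≤ c i) → (∑ i, c i = m) →
    (Nat.card (Words n m c) : ℤ) * ∏ i : Fin n, (((c i + (n - 1 - (i:ℕ))).factorial : ℤ))
      = (m.factorial : ℤ) * vprod (fun i : Fin n => (c i : ℤ) + ((n:ℤ) - 1 - ((i:ℕ):ℤ))) := by
  intro m
  induction m with
  | zero =>
    intro c hc hsum
    have hzero : ∀ i : Fin n, c i = 0 := by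
      intro i
      exact Finset.sum_eq_zero_iff.mp hsum i (Finset.mem_univ i)
    haveI : Unique (Words n 0 c) := by
      refine ⟨⟨⟨fun p => p.elim0, ?_, ?_⟩⟩, ?_⟩
      · intro j i hi
        simp [Finset.filter_eq_empty_iff]
      · intro i
        rw [hzero i]
        simp [Finset.filter_eq_empty_iff]
      · intro w
        apply Subtype.ext
        funext p
        exact p.elim0
    rw [Nat.card_unique]
    have hv : (fun i : Fin n => (c i : ℤ) + ((n:ℤ) - 1 - ((i:ℕ):ℤ)))
        = fun i : Fin n => (n:ℤ) - 1 - ((i:ℕ):ℤ) := by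
      funext i; rw [hzero i]; push_cast; ring
    rw [hv, vprod_delta]
    have hp : ∏ i : Fin n, (((c i + (n - 1 - (i:ℕ))).factorial : ℤ))
        = ∏ i ∈ Finset.range n, ((i.factorial : ℤ)) := by
      calc ∏ i : Fin n, (((c i + (n - 1 - (i:ℕ))).factorial : ℤ))
          = ∏ i : Fin n, (((n - 1 - (i:ℕ)).factorial : ℤ)) := by
            refine Finset.prod_congr rfl fun i _ => by rw [hzero i, zero_add]
        _ = ∏ t ∈ Finset.range n, (((n - 1 - t).factorial : ℤ)) :=
            Fin.prod_univ_eq_prod_range (fun t => (((n - 1 - t).factorial : ℤ))) n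
        _ = ∏ i ∈ Finset.range n, ((i.factorial : ℤ)) :=
            Finset.prod_range_reflect (fun t => ((t.factorial : ℤ))) n
    rw [hp]
    simp
  | succ m ih =>
    intro c hc hsum
    set a : Fin n → ℤ := fun i => (c i : ℤ) + ((n:ℤ) - 1 - ((i:ℕ):ℤ)) with ha
    have hsa : ∑ i, a i - ∑ i : Fin n, ((i:ℕ):ℤ) = ((m:ℤ) + 1) := by
      rw [ha, Finset.sum_add_distrib, sum_reflect_int n]
      have : ∑ i : Fin n, ((c i : ℕ):ℤ) = ((m:ℤ) + 1) := by
        rw [← Nat.cast_sum]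
        rw [hsum]
        push_cast; ring
      rw [this]; ring
    -- per-letter equation
    have hX : ∀ x : Fin n,
        (Nat.card (Words n m (fun t => c t - if t = x then 1 else 0)) : ℤ)
          * ∏ i : Fin n, (((c i + (n - 1 - (i:ℕ))).factorial : ℤ))
        = (m.factorial : ℤ) * (a x * vprod (Function.update a x (a x - 1))) := by
      intro x
      by_cases h1 : ∃ h : (x:ℕ)+1 < n, c ⟨(x:ℕ)+1, h⟩ = c x
      · obtain ⟨hlt, heqc⟩ := h1
        have hxj : x < (⟨(x:ℕ)+1, hlt⟩ : Fin n) := by simp [Fin.lt_def]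
        have hvz : vprod (Function.update a x (a x - 1)) = 0 := by
          apply vprod_eq_zero hxj
          rw [Function.update_self, Function.update_of_ne (Fin.ne_of_gt hxj)]
          rw [ha]
          simp only []
          rw [heqc]
          push_cast
          ring
        rw [hvz]
        have hcard : Nat.card (Words n m (fun t => c t - if t = x then 1 else 0)) = 0 := by
          by_cases h2 : 1 ≤ c x
          · apply card_words_of_desc n m _ x ⟨(x:ℕ)+1, hlt⟩ rfl
            have e2 : (⟨(x:ℕ)+1, hlt⟩ : Fin n) ≠ x := by
              intro hcon
              have := congrArg Fin.val hcon
              simp at this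
            rw [heqc]
            simp only [if_neg e2, Nat.sub_zero]
            simp only [if_true, eq_self_iff_true]
            omega
          · apply card_words_of_sum_ne
            have : ∑ t : Fin n, (c t - if t = x then 1 else 0) = ∑ t : Fin n, c t := by
              refine Finset.sum_congr rfl fun t _ => ?_
              by_cases ht : t = x
              · have e3 : (if t = x then 1 else 0) = 1 := if_pos ht
                rw [e3, ht]
                omega
              · simp [ht]
            omega
        rw [hcard]
        push_cast
        ring
      · by_cases h2 : c x = 0
        · -- x is last row, a x = 0
          have hax : a x = 0 := by
            have hnx : ¬ ((x:ℕ)+1 < n) := by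
              intro hlt
              refine h1 ⟨hlt, ?_⟩
              have := hc x ⟨(x:ℕ)+1, hlt⟩ (by simp [Fin.le_def])
              omega
            have hx1 : (x:ℕ) = n - 1 := by have := x.isLt; omega
            rw [ha]
            simp only []
            rw [h2, hx1]
            have hn1 : 1 ≤ n := by have := x.isLt; omega
            push_cast [Nat.cast_sub hn1]
            ring
          have hcard : Nat.card (Words n m (fun t => c t - if t = x then 1 else 0)) = 0 := by
            apply card_words_of_sum_ne
            have : ∑ t : Fin n, (c t - if t = x then 1 else 0) = ∑ t : Fin n, c t := by
              refine Finset.sum_congr rfl fun t _ => ?_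
              by_cases ht : t = x
              · have e3 : (if t = x then 1 else 0) = 1 := if_pos ht
                rw [e3, ht]
                omega
              · simp [ht]
            omega
          rw [hcard, hax]
          push_cast
          ring
        · -- corner case
          have hcx : 1 ≤ c x := by omega
          have hcorn : ∀ h : (x:ℕ)+1 < n, c ⟨(x:ℕ)+1, h⟩ < c x := by
            intro h
            have hle := hc x ⟨(x:ℕ)+1, h⟩ (by simp [Fin.le_def])
            have hne : c ⟨(x:ℕ)+1, h⟩ ≠ c x := fun hcon => h1 ⟨h, hcon⟩
            omega
          set c' : Fin n → ℕ := fun t => c t - if t = x then 1 else 0 with hc'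
          have hc'anti : ∀ i j : Fin n, i ≤ j → c' j ≤ c' i := by
            intro i j hij
            rw [hc']
            simp only []
            by_cases hi : i = x
            · subst hi
              by_cases hj : j = i
              · subst hj; omega
              · have hij'' : (i:ℕ) ≤ (j:ℕ) := hij
                have hne : (i:ℕ) ≠ (j:ℕ) := fun hh => hj (Fin.val_injective hh.symm)
                have hij' : (i:ℕ) < (j:ℕ) := by omega
                have hlt : (i:ℕ)+1 < n := by have := j.isLt; omega
                have := hcorn hlt
                have h3 := hc ⟨(i:ℕ)+1, hlt⟩ j (by simp [Fin.le_def]; omega)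
                simp [hj, if_pos rfl]
                omega
            · by_cases hj : j = x
              · subst hj
                have := hc i j hij
                simp [hi, if_pos rfl]
                omega
              · have := hc i j hij
                simp [hi, hj]
                omega
          have hsum' : ∑ i, c' i = m := by
            rw [hc']
            have hsub : ∑ t : Fin n, (c t - if t = x then 1 else 0)
                = (∑ t : Fin n, c t) - (∑ t : Fin n, if t = x then 1 else 0) := by
              apply Finset.sum_tsub_distrib
              intro t _
              by_cases ht : t = x
              · rw [if_pos ht, ht]
                exact hcx
              · simp [ht]
            rw [hsub, Finset.sum_ite_eq' Finset.univ x (fun _ => 1)]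
            simp only [Finset.mem_univ, if_true]
            omega
          have hIH := ih c' hc'anti hsum'
          have ha' : (fun i : Fin n => (c' i : ℤ) + ((n:ℤ) - 1 - ((i:ℕ):ℤ)))
              = Function.update a x (a x - 1) := by
            funext t
            by_cases ht : t = x
            · subst ht
              rw [Function.update_self, hc']
              simp only [if_pos rfl, eq_self_iff_true, if_true]
              rw [ha]
              simp only []
              push_cast [Nat.cast_sub hcx]
              ring
            · rw [Function.update_of_ne ht, hc']
              simp only [if_neg ht]
              rw [ha]
              simp
          rw [ha'] at hIH
          -- a x * ∏ c'! = ∏ c!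
          have hfact : a x * ∏ i : Fin n, (((c' i + (n - 1 - (i:ℕ))).factorial : ℤ))
              = ∏ i : Fin n, (((c i + (n - 1 - (i:ℕ))).factorial : ℤ)) := by
            rw [← Finset.mul_prod_erase Finset.univ _ (Finset.mem_univ x),
              ← Finset.mul_prod_erase Finset.univ
                (fun i => (((c i + (n - 1 - (i:ℕ))).factorial : ℤ))) (Finset.mem_univ x)]
            have herase : ∏ i ∈ Finset.univ.erase x, (((c' i + (n - 1 - (i:ℕ))).factorial : ℤ))
                = ∏ i ∈ Finset.univ.erase x, (((c i + (n - 1 - (i:ℕ))).factorial : ℤ)) := by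
              refine Finset.prod_congr rfl fun i hi => ?_
              have : i ≠ x := Finset.ne_of_mem_erase hi
              rw [hc']
              simp [this]
            rw [herase, ← mul_assoc]
            congr 1
            have hK : c x + (n - 1 - (x:ℕ)) = (c' x + (n - 1 - (x:ℕ))) + 1 := by
              rw [hc']; simp only [if_pos rfl, eq_self_iff_true, if_true]; omega
            rw [hK, Nat.factorial_succ]
            have hax2 : a x = ((c' x + (n - 1 - (x:ℕ)) + 1 : ℕ) : ℤ) := by
              rw [ha, hc']
              simp only [if_pos rfl, eq_self_iff_true, if_true]
              have hxn : (x:ℕ) ≤ n - 1 := by have := x.isLt; omega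
              have hn1 : 1 ≤ n := by have := x.isLt; omega
              push_cast [Nat.cast_sub hcx, Nat.cast_sub hxn, Nat.cast_sub hn1]
              ring
            rw [hax2]
            push_cast
            ring
          calc (Nat.card (Words n m c') : ℤ)
                * ∏ i : Fin n, (((c i + (n - 1 - (i:ℕ))).factorial : ℤ))
              = a x * ((Nat.card (Words n m c') : ℤ)
                  * ∏ i : Fin n, (((c' i + (n - 1 - (i:ℕ))).factorial : ℤ))) := by
                rw [← hfact]; ring
            _ = a x * ((m.factorial : ℤ) * vprod (Function.update a x (a x - 1))) := by
                rw [hIH]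
            _ = (m.factorial : ℤ) * (a x * vprod (Function.update a x (a x - 1))) := by ring
    -- sum up
    rw [card_words_succ n m c hc hsum]
    push_cast [Nat.cast_sum]
    rw [Finset.sum_mul]
    rw [Finset.sum_congr rfl (fun x _ => hX x)]
    rw [← Finset.mul_sum, key_vprod, hsa]
    rw [Nat.factorial_succ]
    push_cast
    ring

theorem card_latticeWords (k n : ℕ) :
    Nat.card {w : Fin (k * n) → Fin n // IsLatticeWord w ∧ IsBalanced k w} *
        ∏ i ∈ Finset.range n, Nat.factorial (k + i) =
      Nat.factorial (k * n) * ∏ i ∈ Finset.range n, Nat.factorial i := by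
  have hc : ∀ i j : Fin n, i ≤ j → (fun _ : Fin n => k) j ≤ (fun _ : Fin n => k) i :=
    fun _ _ _ => le_rfl
  have hsum : ∑ _i : Fin n, k = k * n := by
    simp [Finset.sum_const, mul_comm]
  have hmain : (Nat.card (Words n (k * n) (fun _ => k)) : ℤ)
      * ∏ i : Fin n, (((k + (n - 1 - (i:ℕ))).factorial : ℤ))
      = ((k * n).factorial : ℤ)
        * vprod (fun i : Fin n => (k:ℤ) + ((n:ℤ) - 1 - ((i:ℕ):ℤ))) :=
    main_count n (k * n) (fun _ => k) hc hsum
  have hprod1 : ∏ i : Fin n, (((k + (n - 1 - (i:ℕ))).factorial : ℤ))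
      = ∏ i ∈ Finset.range n, (((k + i).factorial : ℤ)) := by
    rw [Fin.prod_univ_eq_prod_range (fun t => (((k + (n - 1 - t)).factorial : ℤ))) n]
    exact Finset.prod_range_reflect (fun t => (((k + t).factorial : ℤ))) n
  have hv : vprod (fun i : Fin n => (k:ℤ) + ((n:ℤ) - 1 - ((i:ℕ):ℤ)))
      = ∏ i ∈ Finset.range n, ((i.factorial : ℤ)) := by
    rw [vprod_shift (fun i : Fin n => (n:ℤ) - 1 - ((i:ℕ):ℤ)) (k:ℤ)]
    exact vprod_delta n
  rw [hprod1, hv] at hmain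
  have hcardeq : Nat.card {w : Fin (k * n) → Fin n // IsLatticeWord w ∧ IsBalanced k w}
      = Nat.card (Words n (k * n) (fun _ => k)) := by
    apply Nat.card_congr
    apply Equiv.subtypeEquivRight
    intro w
    exact Iff.rfl
  rw [hcardeq]
  exact_mod_cast hmain
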